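/- Define F(t) = inf_{ν>0} s(ν, t) where s(ν, t) = exp(ν t − Σ_k μ_k² ν/(1+2σ_k² ν)) Π_k (1+2σ_k² ν)^{−1/2}. Then F is monotonically increasing on (0, Σ_k(μ_k² + σ_k²)), with F(t) → 0 as t → 0⁺ and F(t) → 1 as t → Σ_k(μ_k² + σ_k²). Hence for every ε ∈ (0,1) there exists a unique Chernoff lower bound t = β⊥ ∈ (0, Σ_k(μ_k² + σ_k²)) with F(β⊥) = ε. -/

import Mathlib

open Filter Set



lemma st10_log_le {x : ℝ} (hx : 0 ≤ x) : Real.log (1 + x) ≤ x := by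
  have := Real.log_le_sub_one_of_pos (show (0:ℝ) < 1 + x by linarith); linarith
lemma st10_log_ge {x : ℝ} (hx : 0 ≤ x) : x / (1 + x) ≤ Real.log (1 + x) := by
  have h1 : (0:ℝ) < 1 + x := by linarith
  have h2 := Real.log_le_sub_one_of_pos (show (0:ℝ) < (1+x)⁻¹ by positivity)
  rw [Real.log_inv] at h2
  have h3 : x / (1+x) = 1 - (1+x)⁻¹ := by field_simp; ring
  linarith
lemma st10_log_le_sqrt {x : ℝ} (hx : 0 ≤ x) : Real.log (1 + x) ≤ 2 * Real.sqrt x := by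
  have h1 : (0:ℝ) < 1 + x := by linarith
  have h2 : Real.sqrt (1 + x) ≤ 1 + Real.sqrt x := by
    have hq : (1:ℝ) + x ≤ (1 + Real.sqrt x) ^ 2 := by
      have hs : 0 ≤ Real.sqrt x := Real.sqrt_nonneg x
      have : Real.sqrt x ^ 2 = x := Real.sq_sqrt hx
      nlinarith
    calc Real.sqrt (1 + x) ≤ Real.sqrt ((1 + Real.sqrt x) ^ 2) := Real.sqrt_le_sqrt hq
      _ = 1 + Real.sqrt x := Real.sqrt_sq (by positivity)
  have h3 := Real.log_le_sub_one_of_pos (show (0:ℝ) < Real.sqrt (1 + x) from Real.sqrt_pos.2 h1)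
  have h4 : Real.log (Real.sqrt (1 + x)) = Real.log (1 + x) / 2 := Real.log_sqrt h1.le
  linarith

section
variable {K : ℕ} (μ v : Fin K → ℝ)

noncomputable def st10c (k : Fin K) (ν : ℝ) : ℝ :=
  (μ k) ^ 2 * ν / (1 + 2 * v k * ν) + (1/2) * Real.log (1 + 2 * v k * ν)

noncomputable def st10g (ν t : ℝ) : ℝ :=
  ν * t - ∑ k, (μ k) ^ 2 * ν / (1 + 2 * v k * ν) - (1/2) * ∑ k, Real.log (1 + 2 * v k * ν)

lemma st10g_eq (ν t : ℝ) : st10g μ v ν t = ν * t - ∑ k, st10c μ v k ν := by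
  rw [st10g]
  simp only [st10c, Finset.sum_add_distrib, Finset.mul_sum]
  ring

variable (hv : ∀ k, 0 < v k)
include hv

lemma st10_pos {ν : ℝ} (hν : 0 ≤ ν) (k : Fin K) : 0 < 1 + 2 * v k * ν := by
  have := hv k; nlinarith

lemma st10c_nonneg {ν : ℝ} (hν : 0 ≤ ν) (k : Fin K) : 0 ≤ st10c μ v k ν := by
  have h1 := st10_pos v hv hν k
  have h2 : 0 ≤ Real.log (1 + 2 * v k * ν) := Real.log_nonneg (by nlinarith [hv k])
  have h3 : 0 ≤ (μ k) ^ 2 * ν / (1 + 2 * v k * ν) := by positivity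
  rw [st10c]; linarith

lemma st10c_ub1 {ν : ℝ} (hν : 0 < ν) (k : Fin K) :
    st10c μ v k ν ≤ (μ k) ^ 2 / (2 * v k) + Real.sqrt (2 * v k) * Real.sqrt ν := by
  have hvk := hv k
  have h1 := st10_pos v hv hν.le k
  have ha : (μ k) ^ 2 * ν / (1 + 2 * v k * ν) ≤ (μ k) ^ 2 / (2 * v k) := by
    rw [div_le_div_iff₀ h1 (by positivity)]
    nlinarith [sq_nonneg (μ k)]
  have hb : (1/2) * Real.log (1 + 2 * v k * ν) ≤ Real.sqrt (2 * v k) * Real.sqrt ν := by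
    have := st10_log_le_sqrt (show (0:ℝ) ≤ 2 * v k * ν by positivity)
    rw [Real.sqrt_mul (by positivity : (0:ℝ) ≤ 2 * v k) ν] at this
    linarith
  rw [st10c]; linarith

lemma st10c_ub2 {ν : ℝ} (hν : 0 ≤ ν) (k : Fin K) :
    st10c μ v k ν ≤ ((μ k) ^ 2 + v k) * ν := by
  have hvk := hv k
  have h1 := st10_pos v hv hν k
  have ha : (μ k) ^ 2 * ν / (1 + 2 * v k * ν) ≤ (μ k) ^ 2 * ν := by
    apply div_le_self (by positivity)
    nlinarith
  have hb : (1/2) * Real.log (1 + 2 * v k * ν) ≤ v k * ν := by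
    have := st10_log_le (show (0:ℝ) ≤ 2 * v k * ν by positivity)
    linarith
  rw [st10c]; nlinarith

lemma st10c_lb {ν : ℝ} (hν : 0 ≤ ν) (k : Fin K) :
    ((μ k) ^ 2 + v k) * ν - (2 * (μ k) ^ 2 * v k + 2 * (v k) ^ 2) * ν ^ 2 ≤ st10c μ v k ν := by
  have hvk := hv k
  have h1 := st10_pos v hv hν k
  have ha : (μ k) ^ 2 * ν - 2 * (μ k) ^ 2 * v k * ν ^ 2 ≤ (μ k) ^ 2 * ν / (1 + 2 * v k * ν) := by
    rw [le_div_iff₀ h1]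
    have key : (0:ℝ) ≤ (μ k)^2 * (v k)^2 * ν^3 := by positivity
    nlinarith [key]
  have hb : v k * ν - 2 * (v k) ^ 2 * ν ^ 2 ≤ (1/2) * Real.log (1 + 2 * v k * ν) := by
    have h2 := st10_log_ge (show (0:ℝ) ≤ 2 * v k * ν by positivity)
    have h3 : v k * ν - 2 * (v k) ^ 2 * ν ^ 2 ≤ v k * ν / (1 + 2 * v k * ν) := by
      rw [le_div_iff₀ h1]
      have key : (0:ℝ) ≤ (v k)^3 * ν^3 := by positivity
      nlinarith [key]
    have h4 : v k * ν / (1 + 2 * v k * ν) = (1/2) * (2 * v k * ν / (1 + 2 * v k * ν)) := by ring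
    linarith [mul_le_mul_of_nonneg_left h2 (by norm_num : (0:ℝ) ≤ 1/2)]
  rw [st10c]; nlinarith
noncomputable def st10S : ℝ := ∑ k, ((μ k) ^ 2 + v k)
noncomputable def st10A : ℝ := ∑ k, (μ k) ^ 2 / (2 * v k)
noncomputable def st10B : ℝ := ∑ k, Real.sqrt (2 * v k)
noncomputable def st10C : ℝ := ∑ k, (2 * (μ k) ^ 2 * v k + 2 * (v k) ^ 2)
noncomputable def st10G (t : ℝ) : ℝ := ⨅ ν : Ioi (0:ℝ), st10g μ v ν t




lemma st10S_pos (hK : 0 < K) : 0 < st10S μ v := by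
  rw [st10S]
  apply Finset.sum_pos (fun k _ => by nlinarith [hv k, sq_nonneg (μ k)])
  exact Finset.univ_nonempty_iff.2 (Fin.pos_iff_nonempty.1 hK)

lemma st10A_nonneg : 0 ≤ st10A μ v := by
  rw [st10A]; exact Finset.sum_nonneg fun k _ => by have := hv k; positivity

omit hv in
lemma st10B_nonneg : 0 ≤ st10B v := by
  rw [st10B]; exact Finset.sum_nonneg fun k _ => Real.sqrt_nonneg _

lemma st10C_pos (hK : 0 < K) : 0 < st10C μ v := by
  rw [st10C]
  apply Finset.sum_pos (fun k _ => by nlinarith [hv k, sq_nonneg (μ k), sq_nonneg (μ k * v k)])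
  exact Finset.univ_nonempty_iff.2 (Fin.pos_iff_nonempty.1 hK)

lemma st10g_lb1 {ν : ℝ} (hν : 0 < ν) (t : ℝ) :
    ν * t - st10A μ v - st10B v * Real.sqrt ν ≤ st10g μ v ν t := by
  rw [st10g_eq]
  have h : ∑ k, st10c μ v k ν ≤ st10A μ v + st10B v * Real.sqrt ν := by
    calc ∑ k, st10c μ v k ν
        ≤ ∑ k, ((μ k) ^ 2 / (2 * v k) + Real.sqrt (2 * v k) * Real.sqrt ν) :=
          Finset.sum_le_sum fun k _ => st10c_ub1 μ v hv hν k
      _ = st10A μ v + st10B v * Real.sqrt ν := by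
          rw [Finset.sum_add_distrib, st10A, st10B, Finset.sum_mul]
  linarith

lemma st10g_lb2 {ν : ℝ} (hν : 0 ≤ ν) (t : ℝ) : ν * (t - st10S μ v) ≤ st10g μ v ν t := by
  rw [st10g_eq]
  have h : ∑ k, st10c μ v k ν ≤ st10S μ v * ν := by
    calc ∑ k, st10c μ v k ν ≤ ∑ k, ((μ k) ^ 2 + v k) * ν :=
          Finset.sum_le_sum fun k _ => st10c_ub2 μ v hv hν k
      _ = st10S μ v * ν := by rw [st10S, Finset.sum_mul]
  linarith

lemma st10g_ub {ν : ℝ} (hν : 0 ≤ ν) (t : ℝ) :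
    st10g μ v ν t ≤ ν * (t - st10S μ v) + st10C μ v * ν ^ 2 := by
  rw [st10g_eq]
  have h : st10S μ v * ν - st10C μ v * ν ^ 2 ≤ ∑ k, st10c μ v k ν := by
    calc st10S μ v * ν - st10C μ v * ν ^ 2
        = ∑ k, (((μ k) ^ 2 + v k) * ν - (2 * (μ k) ^ 2 * v k + 2 * (v k) ^ 2) * ν ^ 2) := by
          rw [Finset.sum_sub_distrib, st10S, st10C, Finset.sum_mul, Finset.sum_mul]
      _ ≤ ∑ k, st10c μ v k ν := Finset.sum_le_sum fun k _ => st10c_lb μ v hv hν k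
  linarith

lemma st10_bdd {t : ℝ} (ht : 0 < t) :
    BddBelow (range fun ν : Ioi (0:ℝ) => st10g μ v ↑ν t) := by
  refine ⟨-(st10A μ v + st10B v ^ 2 / (4 * t)), ?_⟩
  rintro x ⟨ν, rfl⟩
  have hν : (0:ℝ) < ν := ν.2
  have h1 := st10g_lb1 μ v hv hν t
  set x := Real.sqrt (ν:ℝ) with hxdef
  have hx : x ^ 2 = (ν:ℝ) := Real.sq_sqrt hν.le
  have h5 : st10B v ^ 2 / (4*t) + ((ν:ℝ) * t - st10B v * x) = (2*t*x - st10B v) ^ 2 / (4*t) := by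
    rw [← hx]; field_simp; ring
  have h6 : (0:ℝ) ≤ (2*t*x - st10B v) ^ 2 / (4*t) := by positivity
  simp only at h1 ⊢
  linarith

lemma st10G_le {t : ℝ} (ht : 0 < t) {ν : ℝ} (hν : 0 < ν) : st10G μ v t ≤ st10g μ v ν t :=
  ciInf_le (st10_bdd μ v hv ht) (⟨ν, hν⟩ : Ioi (0:ℝ))

lemma st10F_eq {t : ℝ} (ht : 0 < t) :
    (⨅ ν : Ioi (0:ℝ), Real.exp (st10g μ v ↑ν t)) = Real.exp (st10G μ v t) :=
  (Monotone.map_ciInf_of_continuousAt (Real.continuous_exp.continuousAt)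
    (fun _ _ h => Real.exp_le_exp.2 h) (st10_bdd μ v hv ht)).symm

lemma st10_s_eq {ν : ℝ} (hν : 0 < ν) (t : ℝ) :
    Real.exp (ν * t - ∑ k, (μ k) ^ 2 * ν / (1 + 2 * v k * ν)) /
        ∏ k, Real.sqrt (1 + 2 * v k * ν) = Real.exp (st10g μ v ν t) := by
  have h1 : ∀ k : Fin K, Real.sqrt (1 + 2 * v k * ν) = Real.exp (Real.log (1 + 2 * v k * ν) / 2) := by
    intro k
    rw [Real.sqrt_eq_rpow, Real.rpow_def_of_pos (st10_pos v hv hν.le k)]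
    ring_nf
  rw [Finset.prod_congr rfl (fun k _ => h1 k), ← Real.exp_sum, ← Real.exp_sub, st10g]
  congr 1
  have h2 : (1/2 : ℝ) * ∑ k, Real.log (1 + 2 * v k * ν)
      = ∑ k : Fin K, Real.log (1 + 2 * v k * ν) / 2 := by
    rw [Finset.mul_sum]; exact Finset.sum_congr rfl (fun k _ => by ring)
  rw [h2]

lemma st10g_contOn (t : ℝ) : ContinuousOn (fun ν => st10g μ v ν t) (Ici (0:ℝ)) := by
  unfold st10g
  apply ContinuousOn.sub
  apply ContinuousOn.sub
  · exact (continuous_id.mul continuous_const).continuousOn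
  · apply continuousOn_finset_sum
    intro k _
    apply ContinuousOn.div
    · exact (continuous_const.mul continuous_id).continuousOn
    · exact (continuous_const.add ((continuous_const.mul continuous_const).mul continuous_id)).continuousOn
    · intro ν hν; exact (st10_pos v hv hν k).ne'
  · apply ContinuousOn.mul continuousOn_const
    apply continuousOn_finset_sum
    intro k _
    apply ContinuousOn.log
    · exact (continuous_const.add ((continuous_const.mul continuous_const).mul continuous_id)).continuousOn
    · intro ν hν; exact (st10_pos v hv hν k).ne'

lemma st10_large (t : ℝ) (ht0 : 0 < t) {ν : ℝ}
    (hν : max 1 ((2*(st10A μ v + st10B v)/t)^2) ≤ ν) : 0 ≤ st10g μ v ν t := by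
  set A := st10A μ v; set B := st10B v
  have hA := st10A_nonneg μ v hv
  have hB := st10B_nonneg v
  have hν1 : (1:ℝ) ≤ ν := le_trans (le_max_left _ _) hν
  have hν0 : (0:ℝ) < ν := by linarith
  have hx1 : (1:ℝ) ≤ Real.sqrt ν := by
    rw [show (1:ℝ) = Real.sqrt 1 from (Real.sqrt_one).symm]
    exact Real.sqrt_le_sqrt hν1
  have hx2 : Real.sqrt ν ^ 2 = ν := Real.sq_sqrt hν0.le
  have hs : 2*(A+B)/t ≤ Real.sqrt ν := by
    calc 2*(A+B)/t = Real.sqrt ((2*(A+B)/t)^2) := (Real.sqrt_sq (by positivity)).symm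
      _ ≤ Real.sqrt ν := Real.sqrt_le_sqrt (le_trans (le_max_right _ _) hν)
  have h2 : 2*(A+B) ≤ Real.sqrt ν * t := (div_le_iff₀ ht0).1 hs
  have h3 : Real.sqrt ν * (2*(A+B)) ≤ Real.sqrt ν * (Real.sqrt ν * t) :=
    mul_le_mul_of_nonneg_left h2 (Real.sqrt_nonneg ν)
  have h4 := st10g_lb1 μ v hv hν0 t
  nlinarith [hx1, hx2, hA, hB]

lemma st10_attain (hK : 0 < K) {t : ℝ} (ht0 : 0 < t) (htS : t < st10S μ v) :
    ∃ ν₀ : ℝ, 0 < ν₀ ∧ ν₀ ≤ max 1 ((2*(st10A μ v + st10B v)/t)^2) ∧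
      (∀ ν : ℝ, 0 < ν → st10g μ v ν₀ t ≤ st10g μ v ν t) ∧ st10g μ v ν₀ t < 0 := by
  set S := st10S μ v with hSdef
  set C := st10C μ v with hCdef
  have hC : 0 < C := st10C_pos μ v hv hK
  have hS : 0 < S := st10S_pos μ v hv hK
  set M := max 1 ((2*(st10A μ v + st10B v)/t)^2) with hMdef
  have hM1 : (1:ℝ) ≤ M := le_max_left _ _
  set ν₁ : ℝ := min 1 ((S - t)/(2*C)) with hν₁def
  have hst : 0 < S - t := by linarith
  have hν₁pos : 0 < ν₁ := lt_min one_pos (div_pos hst (by linarith))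
  have hν₁le : ν₁ ≤ (S - t)/(2*C) := min_le_right _ _
  have hν₁le1 : ν₁ ≤ 1 := min_le_left _ _
  have hg₁ : st10g μ v ν₁ t ≤ -(ν₁*(S - t)/2) := by
    have h1 := st10g_ub μ v hv hν₁pos.le t
    have h2 : C * ν₁ ^ 2 ≤ (S - t)/2 * ν₁ := by
      have h2a := mul_le_mul_of_nonneg_left hν₁le hC.le
      have h2b : C*((S-t)/(2*C)) = (S-t)/2 := by field_simp
      nlinarith
    nlinarith
  have hd : 0 < ν₁*(S - t)/2 := by nlinarith
  set ε₀ : ℝ := min ν₁ (ν₁*(S - t)/(2*S)) with hε₀def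
  have hε₀pos : 0 < ε₀ := lt_min hν₁pos (div_pos (by nlinarith) (by linarith))
  have hε₀le : ε₀ ≤ ν₁ := min_le_left _ _
  have hsmall : ∀ ν : ℝ, 0 < ν → ν ≤ ε₀ → -(ν₁*(S - t)/2) ≤ st10g μ v ν t := by
    intro ν hν hνε
    have h1 := st10g_lb2 μ v hv hν.le t
    have h2 : ν ≤ ν₁*(S - t)/(2*S) := le_trans hνε (min_le_right _ _)
    have h3 : ν * (t - S) ≥ -(S * ν) := by nlinarith
    have h4 : S * ν ≤ S * (ν₁*(S - t)/(2*S)) := mul_le_mul_of_nonneg_left h2 hS.le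
    have h5 : S * (ν₁*(S - t)/(2*S)) = ν₁*(S - t)/2 := by field_simp
    linarith
  have hν₁mem : ν₁ ∈ Icc ε₀ M := ⟨hε₀le, le_trans hν₁le1 hM1⟩
  obtain ⟨ν₀, hν₀mem, hmin⟩ := (isCompact_Icc).exists_isMinOn ⟨ν₁, hν₁mem⟩
    ((st10g_contOn μ v hv t).mono (fun x hx => le_trans hε₀pos.le hx.1))
  rw [isMinOn_iff] at hmin
  have hν₀pos : 0 < ν₀ := lt_of_lt_of_le hε₀pos hν₀mem.1
  have hg₀ : st10g μ v ν₀ t ≤ st10g μ v ν₁ t := hmin ν₁ hν₁mem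
  refine ⟨ν₀, hν₀pos, hν₀mem.2, ?_, lt_of_le_of_lt hg₀ (lt_of_le_of_lt hg₁ (by linarith))⟩
  intro ν hν
  rcases le_or_gt ν ε₀ with hc | hc
  · exact le_trans (le_trans hg₀ hg₁) (hsmall ν hν hc)
  rcases le_or_gt ν M with hc2 | hc2
  · exact hmin ν ⟨hc.le, hc2⟩
  · have := st10_large μ v hv t ht0 (le_of_lt hc2)
    have : st10g μ v ν₀ t ≤ 0 := le_trans hg₀ (le_trans hg₁ (by linarith))
    linarith [st10_large μ v hv t ht0 (le_of_lt hc2)]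


omit hv in
lemma st10g_mono_t {ν t₁ t₂ : ℝ} (hν : 0 ≤ ν) (h : t₁ ≤ t₂) :
    st10g μ v ν t₁ ≤ st10g μ v ν t₂ := by
  unfold st10g
  have := mul_le_mul_of_nonneg_left h hν
  linarith

omit hv in
lemma st10g_shift (ν x y : ℝ) : st10g μ v ν y = st10g μ v ν x + ν * (y - x) := by
  unfold st10g; ring

lemma st10G_attain (hK : 0 < K) {t : ℝ} (ht0 : 0 < t) (htS : t < st10S μ v) :
    ∃ ν₀ : ℝ, 0 < ν₀ ∧ ν₀ ≤ max 1 ((2*(st10A μ v + st10B v)/t)^2) ∧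
      st10G μ v t = st10g μ v ν₀ t ∧ st10G μ v t < 0 := by
  obtain ⟨ν₀, h1, h2, h3, h4⟩ := st10_attain μ v hv hK ht0 htS
  have he : st10G μ v t = st10g μ v ν₀ t :=
    le_antisymm (st10G_le μ v hv ht0 h1) (le_ciInf fun ν => h3 ν ν.2)
  exact ⟨ν₀, h1, h2, he, he ▸ h4⟩

lemma st10G_mono {t₁ t₂ : ℝ} (h1 : 0 < t₁) (h : t₁ ≤ t₂) : st10G μ v t₁ ≤ st10G μ v t₂ :=
  ciInf_mono (st10_bdd μ v hv h1) fun ν => st10g_mono_t μ v ν.2.le h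

lemma st10G_lbS (hK : 0 < K) {t : ℝ} (ht : st10S μ v / 2 ≤ t) (htS : t ≤ st10S μ v) :
    -((st10S μ v - t) * max 1 ((4*(st10A μ v + st10B v)/st10S μ v)^2)) ≤ st10G μ v t := by
  have hS : 0 < st10S μ v := st10S_pos μ v hv hK
  have hAB : 0 ≤ st10A μ v + st10B v := add_nonneg (st10A_nonneg μ v hv) (st10B_nonneg v)
  set S := st10S μ v with hSdef
  set A₀ := max 1 ((4*(st10A μ v + st10B v)/S)^2) with hA₀def
  have hA₀1 : (1:ℝ) ≤ A₀ := le_max_left _ _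
  have ht0 : 0 < t := lt_of_lt_of_le (half_pos hS) ht
  have hStnn : 0 ≤ S - t := by linarith
  apply le_ciInf
  rintro ⟨ν, hν⟩
  simp only
  have hν0 : (0:ℝ) < ν := hν
  rcases le_or_gt (max 1 ((2*(st10A μ v + st10B v)/t)^2)) ν with hc | hc
  · have h0 := st10_large μ v hv t ht0 hc
    nlinarith
  · have hmle : max 1 ((2*(st10A μ v + st10B v)/t)^2) ≤ A₀ := by
      apply max_le hA₀1
      apply le_max_of_le_right
      apply pow_le_pow_left₀ (by positivity)
      calc 2*(st10A μ v + st10B v)/t ≤ 2*(st10A μ v + st10B v)/(S/2) :=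
            div_le_div_of_nonneg_left (by positivity) (half_pos hS) ht
        _ = 4*(st10A μ v + st10B v)/S := by field_simp; ring
    have hνA : ν ≤ A₀ := le_trans hc.le hmle
    have h1 := st10g_lb2 μ v hv hν0.le t
    nlinarith

omit hv in
lemma st10_exp_sub_one {x : ℝ} (hx : 0 ≤ x) : Real.exp x - 1 ≤ x * Real.exp x := by
  have h := Real.add_one_le_exp (-x)
  rw [Real.exp_neg] at h
  have hp := Real.exp_pos x
  nlinarith [mul_le_mul_of_nonneg_right h hp.le, inv_mul_cancel₀ hp.ne']

lemma st10g_single (hK : 0 < K) {ν : ℝ} (hν : 0 < ν) (t : ℝ) :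
    st10g μ v ν t ≤ ν * t - Real.log (1 + 2 * v ⟨0, hK⟩ * ν) / 2 := by
  unfold st10g
  have h1 : 0 ≤ ∑ k, (μ k) ^ 2 * ν / (1 + 2 * v k * ν) :=
    Finset.sum_nonneg fun k _ => by
      have := st10_pos v hv hν.le k; positivity
  have h2 : Real.log (1 + 2 * v ⟨0, hK⟩ * ν) ≤ ∑ k, Real.log (1 + 2 * v k * ν) := by
    apply Finset.single_le_sum (f := fun k => Real.log (1 + 2 * v k * ν))
      (fun k _ => Real.log_nonneg (by nlinarith [hv k])) (Finset.mem_univ _)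
  linarith


lemma st10_lip (hK : 0 < K) {a b x y : ℝ} (ha : 0 < a) (hb : b < st10S μ v)
    (hx : x ∈ Icc a b) (hy : y ∈ Icc a b) (hxy : x ≤ y) :
    Real.exp (st10G μ v y) - Real.exp (st10G μ v x) ≤
      (max 1 ((2*(st10A μ v + st10B v)/a)^2) *
        Real.exp (max 1 ((2*(st10A μ v + st10B v)/a)^2) * (b - a))) * (y - x) := by
  have hAB : 0 ≤ st10A μ v + st10B v := add_nonneg (st10A_nonneg μ v hv) (st10B_nonneg v)
  set Ma := max 1 ((2*(st10A μ v + st10B v)/a)^2) with hMadef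
  have hMa1 : (1:ℝ) ≤ Ma := le_max_left _ _
  have hMa0 : (0:ℝ) ≤ Ma := by linarith
  have hx0 : 0 < x := lt_of_lt_of_le ha hx.1
  have hy0 : 0 < y := lt_of_lt_of_le hx0 hxy
  have hxS : x < st10S μ v := lt_of_le_of_lt hx.2 hb
  have hd : 0 ≤ y - x := by linarith
  obtain ⟨ν₀, hν₀, hν₀le, hGx, hGxneg⟩ := st10G_attain μ v hv hK hx0 hxS
  have hν₀Ma : ν₀ ≤ Ma := by
    refine le_trans hν₀le (max_le_max le_rfl ?_)
    exact pow_le_pow_left₀ (by positivity)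
      (div_le_div_of_nonneg_left (by positivity) ha hx.1) 2
  have hGy_le : st10G μ v y ≤ st10g μ v ν₀ y := st10G_le μ v hv hy0 hν₀
  have hshift : st10g μ v ν₀ y = st10g μ v ν₀ x + ν₀*(y - x) := st10g_shift μ v ν₀ x y
  have h1 : Real.exp (st10G μ v y) ≤ Real.exp (st10G μ v x) * Real.exp (ν₀*(y-x)) := by
    rw [← Real.exp_add]
    apply Real.exp_le_exp.2
    rw [hGx]; linarith
  have hFx1 : Real.exp (st10G μ v x) ≤ 1 := Real.exp_le_one_iff.2 hGxneg.le
  have hone : (1:ℝ) ≤ Real.exp (ν₀*(y-x)) := Real.one_le_exp (by positivity)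
  have h2 : Real.exp (ν₀*(y-x)) - 1 ≤ (ν₀*(y-x)) * Real.exp (ν₀*(y-x)) :=
    st10_exp_sub_one (by positivity)
  have h3 : ν₀*(y-x) ≤ Ma*(b-a) :=
    mul_le_mul hν₀Ma (by linarith [hx.1, hy.2]) hd hMa0
  have h4 : Real.exp (ν₀*(y-x)) ≤ Real.exp (Ma*(b-a)) := Real.exp_le_exp.2 h3
  have hexp0 : (0:ℝ) < Real.exp (st10G μ v x) := Real.exp_pos _
  calc Real.exp (st10G μ v y) - Real.exp (st10G μ v x)
      ≤ Real.exp (st10G μ v x) * (Real.exp (ν₀*(y-x)) - 1) := by nlinarith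
    _ ≤ 1 * (Real.exp (ν₀*(y-x)) - 1) :=
        mul_le_mul_of_nonneg_right hFx1 (by linarith)
    _ ≤ (ν₀*(y-x)) * Real.exp (ν₀*(y-x)) := by linarith
    _ ≤ (Ma*(y-x)) * Real.exp (Ma*(b-a)) := by
        apply mul_le_mul (mul_le_mul_of_nonneg_right hν₀Ma hd) h4 (by positivity)
        positivity
    _ = (Ma * Real.exp (Ma*(b-a))) * (y-x) := by ring

end

/-- F(t) = inf_{ν>0} s(ν,t) is monotonically increasing on
(0, Σ_k(μ_k²+σ_k²)), F(t)→0 as t→0⁺, F(t)→1 as t→Σ_k(μ_k²+σ_k²)⁻, and for every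
ε ∈ (0,1) there is a unique β⊥ in that interval with F(β⊥) = ε. -/
theorem stmt10 (K : ℕ) (hK : 0 < K) (μ v : Fin K → ℝ) (hv : ∀ k, 0 < v k)
    (s : ℝ → ℝ → ℝ)
    (hs : s = fun ν t =>
      Real.exp (ν * t - ∑ k, (μ k) ^ 2 * ν / (1 + 2 * v k * ν)) /
        ∏ k, Real.sqrt (1 + 2 * v k * ν))
    (F : ℝ → ℝ) (hF : F = fun t => ⨅ ν : Ioi (0 : ℝ), s ν t) :
    MonotoneOn F (Ioo 0 (∑ k, ((μ k) ^ 2 + v k))) ∧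
      Tendsto F (nhdsWithin 0 (Ioi 0)) (nhds 0) ∧
      Tendsto F (nhdsWithin (∑ k, ((μ k) ^ 2 + v k)) (Iio (∑ k, ((μ k) ^ 2 + v k)))) (nhds 1) ∧
      ∀ ε : ℝ, 0 < ε → ε < 1 →
        ∃! t : ℝ, t ∈ Ioo 0 (∑ k, ((μ k) ^ 2 + v k)) ∧ F t = ε := by
  rw [show (∑ k, ((μ k) ^ 2 + v k)) = st10S μ v from rfl]
  have hS : 0 < st10S μ v := st10S_pos μ v hv hK
  have hFt : ∀ t : ℝ, 0 < t → F t = Real.exp (st10G μ v t) := by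
    intro t ht
    simp only [hF]
    rw [iInf_congr (fun ν : Ioi (0:ℝ) => by
      simp only [hs]; exact st10_s_eq μ v hv ν.2 t)]
    exact st10F_eq μ v hv ht
  -- Part 1 : monotone
  have hmono : MonotoneOn F (Ioo 0 (st10S μ v)) := by
    intro a ha b hb hab
    rw [hFt a ha.1, hFt b hb.1]
    exact Real.exp_le_exp.2 (st10G_mono μ v hv ha.1 hab)
  -- Part 2 : limit 0 at 0+
  have hc0 : 0 < v ⟨0, hK⟩ := hv _
  have hT0 : Tendsto F (nhdsWithin 0 (Ioi 0)) (nhds 0) := by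
    have hub : ∀ t : ℝ, 0 < t →
        F t ≤ Real.exp (1 - Real.log (1 + 2 * v ⟨0, hK⟩ * t⁻¹) / 2) := by
      intro t ht
      rw [hFt t ht]
      apply Real.exp_le_exp.2
      have h1 : st10G μ v t ≤ st10g μ v t⁻¹ t := st10G_le μ v hv ht (by positivity)
      have h2 := st10g_single μ v hv hK (show (0:ℝ) < t⁻¹ by positivity) t
      rw [inv_mul_cancel₀ ht.ne'] at h2
      linarith
    have hup : Tendsto (fun t : ℝ => Real.exp (1 - Real.log (1 + 2 * v ⟨0, hK⟩ * t⁻¹) / 2))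
        (nhdsWithin 0 (Ioi 0)) (nhds 0) := by
      apply Real.tendsto_exp_atBot.comp
      have h1 : Tendsto (fun t : ℝ => t⁻¹) (nhdsWithin 0 (Ioi 0)) atTop := tendsto_inv_nhdsGT_zero
      have h2 : Tendsto (fun t : ℝ => 1 + 2 * v ⟨0, hK⟩ * t⁻¹) (nhdsWithin 0 (Ioi 0)) atTop :=
        tendsto_atTop_add_const_left _ 1 (h1.const_mul_atTop (by positivity))
      have h3 := Real.tendsto_log_atTop.comp h2
      have h4 : Tendsto (fun t : ℝ => Real.log (1 + 2 * v ⟨0, hK⟩ * t⁻¹) / 2)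
          (nhdsWithin 0 (Ioi 0)) atTop := h3.atTop_div_const (by norm_num)
      simp only [sub_eq_add_neg]
      exact tendsto_atBot_add_const_left _ 1 (tendsto_neg_atTop_atBot.comp h4)
    refine tendsto_of_tendsto_of_tendsto_of_le_of_le' tendsto_const_nhds hup ?_ ?_
    · filter_upwards [self_mem_nhdsWithin] with t ht
      rw [hFt t ht]
      exact (Real.exp_pos _).le
    · filter_upwards [self_mem_nhdsWithin] with t ht
      exact hub t ht
  -- Part 3 : limit 1 at S-
  have hT1 : Tendsto F (nhdsWithin (st10S μ v) (Iio (st10S μ v))) (nhds 1) := by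
    have hIoo : Ioo (st10S μ v / 2) (st10S μ v) ∈ nhdsWithin (st10S μ v) (Iio (st10S μ v)) :=
      Ioo_mem_nhdsLT_of_mem ⟨half_lt_self hS, le_refl _⟩
    have hGto : Tendsto (st10G μ v) (nhdsWithin (st10S μ v) (Iio (st10S μ v))) (nhds 0) := by
      have hlow : Tendsto
          (fun t => -((st10S μ v - t) * max 1 ((4*(st10A μ v + st10B v)/st10S μ v)^2)))
          (nhdsWithin (st10S μ v) (Iio (st10S μ v))) (nhds 0) := by
        have hcont : Continuous
            (fun t : ℝ => -((st10S μ v - t) * max 1 ((4*(st10A μ v + st10B v)/st10S μ v)^2))) := by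
          continuity
        have := hcont.tendsto' (st10S μ v) 0 (by ring)
        exact this.mono_left nhdsWithin_le_nhds
      refine tendsto_of_tendsto_of_tendsto_of_le_of_le' hlow tendsto_const_nhds ?_ ?_
      · filter_upwards [hIoo] with t ht
        exact st10G_lbS μ v hv hK ht.1.le ht.2.le
      · filter_upwards [hIoo] with t ht
        obtain ⟨ν₀, _, _, _, h4⟩ :=
          st10G_attain μ v hv hK (lt_trans (half_pos hS) ht.1) ht.2
        exact h4.le
    have hexp : Tendsto (fun t => Real.exp (st10G μ v t))
        (nhdsWithin (st10S μ v) (Iio (st10S μ v))) (nhds 1) := by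
      have := (Real.continuous_exp.tendsto 0).comp hGto
      rwa [Real.exp_zero] at this
    apply hexp.congr'
    filter_upwards [hIoo] with t ht
    exact (hFt t (lt_trans (half_pos hS) ht.1)).symm
  -- strict monotonicity
  have hstrict : StrictMonoOn F (Ioo 0 (st10S μ v)) := by
    intro a ha b hb hab
    obtain ⟨ν₀, hν₀, _, hGb, _⟩ := st10G_attain μ v hv hK hb.1 hb.2
    rw [hFt a ha.1, hFt b hb.1]
    apply Real.exp_lt_exp.2
    calc st10G μ v a ≤ st10g μ v ν₀ a := st10G_le μ v hv ha.1 hν₀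
      _ < st10g μ v ν₀ b := by rw [st10g_shift μ v ν₀ a b]; nlinarith
      _ = st10G μ v b := hGb.symm
  -- continuity on compact subintervals
  have hcont : ∀ a b : ℝ, 0 < a → b < st10S μ v → ContinuousOn F (Icc a b) := by
    intro a b ha hb
    rcases le_or_gt a b with hab | hab
    swap
    · rw [Icc_eq_empty (not_le.2 hab)]; exact continuousOn_empty _
    set Ma := max 1 ((2*(st10A μ v + st10B v)/a)^2) with hMadef
    have hMa0 : (0:ℝ) ≤ Ma := le_trans zero_le_one (le_max_left _ _)
    set L := Ma * Real.exp (Ma * (b - a)) with hLdef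
    have hL : 0 ≤ L := by positivity
    have key : ∀ x ∈ Icc a b, ∀ y ∈ Icc a b, x ≤ y → F y - F x ≤ L * (y - x) := by
      intro x hx y hy hxy
      have hx0 : 0 < x := lt_of_lt_of_le ha hx.1
      have hy0 : 0 < y := lt_of_lt_of_le hx0 hxy
      rw [hFt x hx0, hFt y hy0]
      exact st10_lip μ v hv hK ha hb hx hy hxy
    have hmono' : ∀ x ∈ Icc a b, ∀ y ∈ Icc a b, x ≤ y → F x ≤ F y := by
      intro x hx y hy hxy
      have hx0 : 0 < x := lt_of_lt_of_le ha hx.1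
      have hy0 : 0 < y := lt_of_lt_of_le hx0 hxy
      rw [hFt x hx0, hFt y hy0]
      exact Real.exp_le_exp.2 (st10G_mono μ v hv hx0 hxy)
    apply LipschitzOnWith.continuousOn (K := L.toNNReal)
    apply LipschitzOnWith.of_dist_le_mul
    intro x hx y hy
    rw [Real.dist_eq, Real.dist_eq, Real.coe_toNNReal L hL]
    rcases le_total x y with hxy | hxy
    · rw [abs_of_nonpos (by linarith [hmono' x hx y hy hxy]), abs_of_nonpos (by linarith)]
      have := key x hx y hy hxy
      linarith
    · rw [abs_of_nonneg (by linarith [hmono' y hy x hx hxy]), abs_of_nonneg (by linarith)]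
      have := key y hy x hx hxy
      linarith
  refine ⟨hmono, hT0, hT1, ?_⟩
  intro ε hε0 hε1
  have hev2 : Ioo (0:ℝ) (st10S μ v) ∈ nhdsWithin 0 (Ioi 0) :=
    Ioo_mem_nhdsGT_of_mem ⟨le_refl 0, hS⟩
  obtain ⟨a, haε, haIoo⟩ :=
    ((eventually_of_mem (mem_map.1 (hT0 (Iio_mem_nhds hε0))) (fun t ht => ht)).and
      (eventually_of_mem hev2 (fun t ht => ht))).exists
  have hev3 : Ioo (0:ℝ) (st10S μ v) ∈ nhdsWithin (st10S μ v) (Iio (st10S μ v)) :=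
    Ioo_mem_nhdsLT_of_mem ⟨hS, le_refl _⟩
  obtain ⟨b, hbε, hbIoo⟩ :=
    ((eventually_of_mem (mem_map.1 (hT1 (Ioi_mem_nhds hε1))) (fun t ht => ht)).and
      (eventually_of_mem hev3 (fun t ht => ht))).exists
  have haε' : F a < ε := haε
  have hbε' : ε < F b := hbε
  have hab : a < b := by
    by_contra h
    push_neg at h
    have := hmono hbIoo haIoo h
    linarith
  have hεmem : ε ∈ Icc (F a) (F b) := ⟨haε'.le, hbε'.le⟩
  obtain ⟨t, htmem, htval⟩ :=
    intermediate_value_Icc hab.le (hcont a b haIoo.1 hbIoo.2) hεmem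
  have htIoo : t ∈ Ioo 0 (st10S μ v) :=
    ⟨lt_of_lt_of_le haIoo.1 htmem.1, lt_of_le_of_lt htmem.2 hbIoo.2⟩
  refine ⟨t, ⟨htIoo, htval⟩, ?_⟩
  rintro t' ⟨ht'mem, ht'val⟩
  exact hstrict.injOn ht'mem htIoo (by rw [ht'val, htval])
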